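/- Let R be an integral domain which is a ℚ-algebra, let f ∈ R⟦X⟧ have zero constant coefficient, and let g := exp ∘ f ∈ R⟦X⟧ (the substitution of f into the exponential series, defined since f has zero constant term), whose multiplicative inverse is exp ∘ (−f). Then for every n ≥ 1, applying the autonomous polynomials over the ring R⟦X⟧ to the sequence Δg = (δ^j g)_{j≥0}: A_n(Δg) = g^n · A_n(Y), where Y : ℕ → R⟦X⟧ is the sequence Y(j) := (exp ∘ (−f)) · δ^j g. -/

import Mathlib

/-- Binomial (Hurwitz) convolution of sequences: `(y ⊛ z)(n) = ∑ (n choose k) y(k) z(n-k)`. -/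
def hconv {R : Type*} [CommRing R] (y z : ℕ → R) : ℕ → R :=
  fun n => ∑ k ∈ Finset.range (n + 1), (n.choose k : R) * y k * z (n - k)

/-- `DSeq x m` is `D_{m+1}(x)`, where `D_1(x) = x` and `D_{m+1}(x) = x ⊛ σ(D_m(x))`. -/
def DSeq {R : Type*} [CommRing R] (x : ℕ → R) : ℕ → ℕ → R
  | 0 => x
  | m + 1 => hconv x (fun j => DSeq x m (j + 1))

/-- `autPoly x n` is the `n`-th autonomous polynomial `A_n(x) = D_n(x)(0)`, meaningful for
`n ≥ 1`. -/
def autPoly {R : Type*} [CommRing R] (x : ℕ → R) (n : ℕ) : R := DSeq x (n - 1) 0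

/-- The autonomous operator `𝔄(x)(n) = A_{n+1}(x)`. -/
def autOp {R : Type*} [CommRing R] (x : ℕ → R) (n : ℕ) : R := autPoly x (n + 1)

open PowerSeries

/-- Composition `g ∘ f` of formal power series; this is the substitution of `f` into `g`,
correct when `f` has zero constant coefficient. -/
noncomputable def psComp {R : Type*} [CommRing R] (g f : PowerSeries R) : PowerSeries R :=
  PowerSeries.mk fun n => ∑ k ∈ Finset.range (n + 1),
    PowerSeries.coeff k g * PowerSeries.coeff n (f ^ k)


lemma coeff_pow_of_lt {R : Type*} [CommRing R] {f : PowerSeries R}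
    (hf : PowerSeries.constantCoeff f = 0) {n m : ℕ} (h : n < m) :
    PowerSeries.coeff n (f ^ m) = 0 := by
  have hX : (X : PowerSeries R) ∣ f := X_dvd_iff.mpr hf
  exact (X_pow_dvd_iff.mp (pow_dvd_pow_of_dvd hX m)) n h

lemma psComp_one {R : Type*} [CommRing R] (f : PowerSeries R) :
    psComp (1 : PowerSeries R) f = 1 := by
  ext n
  simp only [psComp, coeff_mk, coeff_one]
  rw [Finset.sum_eq_single 0]
  · simp
  · intro k _ hk; simp [hk]
  · simp

lemma psComp_mul {R : Type*} [CommRing R] (a b f : PowerSeries R)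
    (hf : PowerSeries.constantCoeff f = 0) :
    psComp (a * b) f = psComp a f * psComp b f := by
  ext n
  simp only [psComp, coeff_mk, coeff_mul]
  set A := fun k => PowerSeries.coeff k a with hA
  set B := fun k => PowerSeries.coeff k b with hB
  have key : ∀ k l : ℕ, ∑ pq ∈ Finset.HasAntidiagonal.antidiagonal n,
      PowerSeries.coeff pq.1 (f ^ k) * PowerSeries.coeff pq.2 (f ^ l)
      = PowerSeries.coeff n (f ^ (k + l)) := by
    intro k l
    rw [pow_add, PowerSeries.coeff_mul]
  -- common value
  trans ∑ k ∈ Finset.range (n + 1), ∑ l ∈ Finset.range (n + 1),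
      A k * B l * PowerSeries.coeff n (f ^ (k + l))
  · -- LHS
    have step1 : ∑ m ∈ Finset.range (n + 1),
        (∑ ij ∈ Finset.HasAntidiagonal.antidiagonal m, A ij.1 * B ij.2) * PowerSeries.coeff n (f ^ m)
        = ∑ m ∈ Finset.range (n + 1), ∑ ij ∈ Finset.HasAntidiagonal.antidiagonal m,
            A ij.1 * B ij.2 * PowerSeries.coeff n (f ^ (ij.1 + ij.2)) := by
      refine Finset.sum_congr rfl fun m hm => ?_
      rw [Finset.sum_mul]
      refine Finset.sum_congr rfl fun p hp => ?_
      rw [Finset.HasAntidiagonal.mem_antidiagonal] at hp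
      rw [hp]
    rw [step1]
    have hdisj : (↑(Finset.range (n + 1)) : Set ℕ).PairwiseDisjoint
        (fun m => Finset.HasAntidiagonal.antidiagonal m) := by
      intro i _ j _ hij
      simp only [Finset.disjoint_left]
      intro p hpi hpj
      rw [Finset.HasAntidiagonal.mem_antidiagonal] at hpi hpj
      exact hij (hpi ▸ hpj)
    rw [← Finset.sum_biUnion hdisj]
    have hsub : ((Finset.range (n + 1)).biUnion fun m => Finset.HasAntidiagonal.antidiagonal m)
        ⊆ Finset.range (n + 1) ×ˢ Finset.range (n + 1) := by
      intro p hp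
      simp only [Finset.mem_biUnion, Finset.HasAntidiagonal.mem_antidiagonal, Finset.mem_range,
        Finset.mem_product] at hp ⊢
      obtain ⟨m, hm, rfl⟩ := hp
      omega
    have hzero : ∀ p ∈ Finset.range (n + 1) ×ˢ Finset.range (n + 1),
        p ∉ ((Finset.range (n + 1)).biUnion fun m => Finset.HasAntidiagonal.antidiagonal m) →
        A p.1 * B p.2 * PowerSeries.coeff n (f ^ (p.1 + p.2)) = 0 := by
      intro p hp hnp
      simp only [Finset.mem_biUnion, Finset.HasAntidiagonal.mem_antidiagonal, Finset.mem_range,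
        Finset.mem_product] at hp hnp
      have : n < p.1 + p.2 := by
        by_contra h
        exact hnp ⟨p.1 + p.2, by omega, rfl⟩
      rw [coeff_pow_of_lt hf this, mul_zero]
    rw [Finset.sum_subset hsub hzero, Finset.sum_product]
  · -- RHS
    symm
    have step1 : ∀ pq ∈ Finset.HasAntidiagonal.antidiagonal n,
        (∑ k ∈ Finset.range (pq.1 + 1), A k * PowerSeries.coeff pq.1 (f ^ k)) *
        (∑ l ∈ Finset.range (pq.2 + 1), B l * PowerSeries.coeff pq.2 (f ^ l))
        = (∑ k ∈ Finset.range (n + 1), A k * PowerSeries.coeff pq.1 (f ^ k)) *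
        (∑ l ∈ Finset.range (n + 1), B l * PowerSeries.coeff pq.2 (f ^ l)) := by
      intro pq hpq
      rw [Finset.HasAntidiagonal.mem_antidiagonal] at hpq
      congr 1
      · refine Finset.sum_subset (by intro k hk; simp only [Finset.mem_range] at *; omega) ?_
        intro k _ hk
        simp only [Finset.mem_range] at hk
        rw [coeff_pow_of_lt hf (by omega), mul_zero]
      · refine Finset.sum_subset (by intro k hk; simp only [Finset.mem_range] at *; omega) ?_
        intro k _ hk
        simp only [Finset.mem_range] at hk
        rw [coeff_pow_of_lt hf (by omega), mul_zero]
    rw [Finset.sum_congr rfl step1]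
    simp only [Finset.sum_mul_sum, ← key]
    rw [Finset.sum_comm]
    refine Finset.sum_congr rfl fun k _ => ?_
    rw [Finset.sum_comm]
    refine Finset.sum_congr rfl fun l _ => ?_
    rw [Finset.mul_sum]
    refine Finset.sum_congr rfl fun pq _ => ?_
    ring

lemma psComp_neg {R : Type*} [CommRing R] (a f : PowerSeries R) :
    psComp a (-f) = psComp (rescale (-1 : R) a) f := by
  ext n
  simp only [psComp, coeff_mk, coeff_rescale]
  refine Finset.sum_congr rfl fun k _ => ?_
  have h1 : (-f) ^ k = PowerSeries.C ((-1 : R) ^ k) * f ^ k := by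
    rw [neg_pow, map_pow, map_neg, map_one]
  rw [h1, PowerSeries.coeff_C_mul]
  ring

lemma DSeq_smul {R : Type*} [CommRing R] (c : R) (x : ℕ → R) (m n : ℕ) :
    DSeq (fun j => c * x j) m n = c ^ (m + 1) * DSeq x m n := by
  induction m generalizing n with
  | zero => simp [DSeq]
  | succ m ih =>
    simp only [DSeq, hconv]
    rw [Finset.mul_sum]
    refine Finset.sum_congr rfl fun k _ => ?_
    rw [ih]
    ring

/-- Let `R` be an integral domain which is a `ℚ`-algebra, `f ∈ R⟦X⟧` with zero constant
coefficient, and `g = exp ∘ f`, whose multiplicative inverse is `exp ∘ (-f)`. Then for every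
`n ≥ 1`, applying the autonomous polynomials over `R⟦X⟧` to `Δg = (δ^j g)_j`:
`A_n(Δg) = g^n · A_n(Y)` where `Y(j) = (exp ∘ (-f)) · δ^j g`. -/
theorem autPoly_exp_comp {R : Type*} [CommRing R] [IsDomain R] [Algebra ℚ R]
    (f : PowerSeries R) (hf : PowerSeries.constantCoeff f = 0)
    (g : PowerSeries R) (hg : g = psComp (exp R) f) :
    g * psComp (exp R) (-f) = 1 ∧
    ∀ n : ℕ, 1 ≤ n →
      autPoly (fun j => derivativeFun^[j] g) n =
        g ^ n * autPoly (fun j => psComp (exp R) (-f) * derivativeFun^[j] g) n := by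
  have h1 : g * psComp (exp R) (-f) = 1 := by
    rw [hg, psComp_neg, ← psComp_mul _ _ _ hf]
    have : exp R * rescale (-1 : R) (exp R) = 1 := exp_mul_exp_neg_eq_one
    rw [this, psComp_one]
  refine ⟨h1, fun n hn => ?_⟩
  have key : autPoly (fun j => psComp (exp R) (-f) * derivativeFun^[j] g) n
      = psComp (exp R) (-f) ^ n * autPoly (fun j => derivativeFun^[j] g) n := by
    unfold autPoly
    rw [DSeq_smul]
    congr 2
    omega
  rw [key, ← mul_assoc, ← mul_pow, h1, one_pow, one_mul]
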